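/- If G is a finitely generated group admitting a surjective homomorphism onto ℤ (i.e., G is indicable), then G has arbitrarily large finite quotients; consequently, for every positive integer n, G admits a finite generating set with respect to which its dead-end depth is at least n. -/

import Mathlib

/-- Word length of `g` with respect to generating set `S` (using `S ∪ S⁻¹`). -/
noncomputable def wl {G : Type*} [Group G] (S : Set G) (g : G) : ℕ :=
  sInf {n | ∃ l : List G, (∀ x ∈ l, x ∈ S ∨ x⁻¹ ∈ S) ∧ l.length = n ∧ l.prod = g}

/-- Word metric with respect to `S`. -/
noncomputable def wdist {G : Type*} [Group G] (S : Set G) (g h : G) : ℕ := wl S (g⁻¹ * h)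

/-- Dead-end depth of `g` with respect to `A`: distance to the nearest element strictly
farther from the identity, `⊤` if none exists. -/
noncomputable def depth {G : Type*} [Group G] (A : Set G) (g : G) : ℕ∞ :=
  sInf ((fun g' => (wdist A g g' : ℕ∞)) '' {g' | wl A g < wl A g'})

/-- Partial product `u 0 * u 1 * ⋯ * u (i-1)`. -/
def pprod {M : Type*} [Monoid M] (u : ℕ → M) (i : ℕ) : M := ((List.range i).map u).prod

section Aux

variable {G : Type*} [Group G]

/-- `x` has a word of length at most `d` over `S ∪ S⁻¹`. -/
def HasWord (S : Set G) (x : G) (d : ℕ) : Prop :=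
  ∃ l : List G, (∀ u ∈ l, u ∈ S ∨ u⁻¹ ∈ S) ∧ l.length ≤ d ∧ l.prod = x

namespace HasWord

theorem wl_le {S : Set G} {x : G} {d : ℕ} (h : HasWord S x d) : wl S x ≤ d := by
  obtain ⟨l, h1, h2, h3⟩ := h
  exact le_trans (Nat.sInf_le ⟨l, h1, rfl, h3⟩) h2

theorem mono {S : Set G} {x : G} {d d' : ℕ} (h : HasWord S x d) (hd : d ≤ d') :
    HasWord S x d' := by
  obtain ⟨l, h1, h2, h3⟩ := h
  exact ⟨l, h1, h2.trans hd, h3⟩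

theorem mul {S : Set G} {x y : G} {d e : ℕ} (hx : HasWord S x d) (hy : HasWord S y e) :
    HasWord S (x * y) (d + e) := by
  obtain ⟨l, h1, h2, h3⟩ := hx
  obtain ⟨l', h1', h2', h3'⟩ := hy
  refine ⟨l ++ l', ?_, by simpa using Nat.add_le_add h2 h2', by simp [h3, h3']⟩
  intro u hu
  rcases List.mem_append.1 hu with h | h
  exacts [h1 u h, h1' u h]

theorem inv {S : Set G} {x : G} {d : ℕ} (hx : HasWord S x d) : HasWord S x⁻¹ d := by
  obtain ⟨l, h1, h2, h3⟩ := hx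
  refine ⟨(l.map fun u => u⁻¹).reverse, ?_, by simpa using h2, ?_⟩
  · intro u hu
    simp only [List.mem_reverse, List.mem_map] at hu
    obtain ⟨v, hv, rfl⟩ := hu
    rcases h1 v hv with h | h
    · exact Or.inr (by simpa using h)
    · exact Or.inl h
  · rw [← h3]
    exact (List.prod_inv_reverse l).symm

theorem single {S : Set G} {x : G} (hx : x ∈ S) : HasWord S x 1 :=
  ⟨[x], by simp [hx], by simp, by simp⟩

theorem one (S : Set G) : HasWord S 1 0 := ⟨[], by simp, by simp, rfl⟩

theorem pow {S : Set G} {x : G} (hx : x ∈ S) (j : ℕ) : HasWord S (x ^ j) j := by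
  refine ⟨List.replicate j x, ?_, by simp, by simp⟩
  intro u hu
  rw [List.eq_of_mem_replicate hu]
  exact Or.inl hx

theorem zpow {S : Set G} {x : G} (hx : x ∈ S) (c : ℤ) : HasWord S (x ^ c) c.natAbs := by
  rcases Int.natAbs_eq c with h | h
  · nth_rewrite 1 [h]
    rw [zpow_natCast]
    exact pow hx _
  · nth_rewrite 1 [h]
    rw [zpow_neg, zpow_natCast]
    exact (pow hx _).inv

end HasWord

theorem exists_word {S : Set G} (hgen : Subgroup.closure S = ⊤) (x : G) :
    ∃ l : List G, (∀ u ∈ l, u ∈ S ∨ u⁻¹ ∈ S) ∧ l.prod = x := by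
  have hx : x ∈ Submonoid.closure (S ∪ S⁻¹) := by
    rw [← Subgroup.closure_toSubmonoid, hgen]
    trivial
  obtain ⟨l, h1, h2⟩ := Submonoid.exists_list_of_mem_closure hx
  refine ⟨l, fun u hu => ?_, h2⟩
  rcases h1 u hu with h | h
  · exact Or.inl h
  · exact Or.inr (Set.mem_inv.1 h)

theorem hasWord_wl {S : Set G} (hgen : Subgroup.closure S = ⊤) (x : G) :
    HasWord S x (wl S x) := by
  obtain ⟨l, h1, h2⟩ := exists_word hgen x
  have hne : {n | ∃ l : List G, (∀ u ∈ l, u ∈ S ∨ u⁻¹ ∈ S) ∧ l.length = n ∧ l.prod = x}.Nonempty :=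
    ⟨l.length, l, h1, rfl, h2⟩
  obtain ⟨l', g1, g2, g3⟩ := Nat.sInf_mem hne
  exact ⟨l', g1, le_of_eq g2, g3⟩

theorem finite_lists {α : Type*} {s : Set α} (hs : s.Finite) :
    ∀ d : ℕ, {l : List α | (∀ x ∈ l, x ∈ s) ∧ l.length ≤ d}.Finite := by
  intro d
  induction d with
  | zero =>
    apply Set.Finite.subset (Set.finite_singleton ([] : List α))
    rintro l ⟨-, h⟩
    simpa using List.eq_nil_of_length_eq_zero (Nat.le_zero.1 h)
  | succ d ih =>
    apply Set.Finite.subset ((Set.Finite.image2 List.cons hs ih).insert [])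
    rintro l ⟨h1, h2⟩
    cases l with
    | nil => exact Set.mem_insert _ _
    | cons a l =>
      refine Set.mem_insert_of_mem _ (Set.mem_image2_of_mem (h1 a (by simp)) ?_)
      exact ⟨fun x hx => h1 x (by simp [hx]), by simpa using h2⟩

theorem ball_finite {S : Set G} (hS : S.Finite) (hgen : Subgroup.closure S = ⊤) (R : ℕ) :
    {x : G | wl S x ≤ R}.Finite := by
  apply Set.Finite.subset ((finite_lists (hS.union hS.inv) R).image List.prod)
  intro x hx
  obtain ⟨l, h1, h2, h3⟩ := hasWord_wl hgen x
  refine ⟨l, ⟨fun u hu => ?_, h2.trans hx⟩, h3⟩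
  rcases h1 u hu with h | h
  · exact Set.mem_union_left _ h
  · exact Set.mem_union_right _ (Set.mem_inv.2 h)

end Aux

/-- If `G` is finitely generated and indicable (surjects onto `ℤ`), then `G` has arbitrarily
large finite quotients, and hence for every positive `n` admits a finite generating set with
respect to which its dead-end depth is at least `n`. -/
theorem stmt14 {G : Type*} [Group G] [Group.FG G]
    (hind : ∃ π : G →* Multiplicative ℤ, Function.Surjective π) :
    (∀ m : ℕ, ∃ (Q : Type) (_ : Group Q) (_ : Finite Q) (π : G →* Q),
      Function.Surjective π ∧ m ≤ Nat.card Q) ∧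
    ∀ n : ℕ, 0 < n → ∃ A : Set G, A.Finite ∧ Subgroup.closure A = ⊤ ∧
      (n : ℕ∞) ≤ ⨆ g : G, depth A g := by
  obtain ⟨π, hπ⟩ := hind
  constructor
  · intro m
    refine ⟨Multiplicative (ZMod (m + 1)), inferInstance, inferInstance,
      (AddMonoidHom.toMultiplicative (Int.castAddHom (ZMod (m + 1)))).comp π, ?_, ?_⟩
    · rw [MonoidHom.coe_comp]
      apply Function.Surjective.comp ?_ hπ
      intro x
      obtain ⟨y, hy⟩ := ZMod.intCast_surjective (n := m + 1) x.toAdd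
      exact ⟨Multiplicative.ofAdd y, by simp [AddMonoidHom.toMultiplicative, hy]⟩
    · rw [Nat.card_congr (Multiplicative.toAdd (α := ZMod (m + 1))), Nat.card_zmod]
      omega
  · intro n hn
    -- finite generating set of G
    obtain ⟨Sset, hSgen0, hSfin⟩ := Group.fg_iff.1 ‹Group.FG G›
    -- the additive version of π
    set p : G → ℤ := fun g => (π g).toAdd with hp
    have hp_mul : ∀ x y : G, p (x * y) = p x + p y := by intro x y; simp [hp]
    have hp_inv : ∀ x : G, p x⁻¹ = -p x := by intro x; simp [hp]
    obtain ⟨t, ht⟩ := hπ (Multiplicative.ofAdd 1)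
    have hpt : p t = 1 := by simp [hp, ht]
    have hp_pow : ∀ j : ℕ, p (t ^ j) = j := by
      intro j
      simp [hp, map_pow, ht, toAdd_pow]
    -- constants
    obtain ⟨S, hS⟩ := hSfin.exists_finset_coe
    have hSgen : Subgroup.closure (↑S : Set G) = ⊤ := by rw [hS]; exact hSgen0
    set W : ℕ := S.sup (fun s => 1 + (1 - p s).natAbs) + 1 with hW
    have hW1 : 1 ≤ W := by omega
    set k : ℕ := 4 * n + W with hk
    set m : ℕ := 2 * k with hm
    set R : ℕ := 6 * k with hR
    haveI : NeZero m := ⟨by omega⟩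
    -- auxiliary generating set T
    set T : Set G := (↑S : Set G) ∪ {t} with hT
    have htT : t ∈ T := Set.mem_union_right _ rfl
    have hTfin : T.Finite := S.finite_toSet.union (Set.finite_singleton t)
    have hTgen : Subgroup.closure T = ⊤ := by
      rw [eq_top_iff, ← hSgen]
      exact Subgroup.closure_mono Set.subset_union_left
    -- the generating set A
    set A : Set G := {x | ((p x : ℤ) : ZMod m) = 1 ∧ wl T x ≤ R} with hA
    have htA : t ∈ A := by
      refine ⟨by rw [hpt]; simp, (HasWord.single htT).wl_le.trans (by omega)⟩
    -- A generates
    have hgenA : Subgroup.closure A = ⊤ := by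
      rw [eq_top_iff, ← hSgen]
      apply (Subgroup.closure_le _).2
      intro s hs
      have hxsA : s * t ^ (1 - p s) ∈ A := by
        constructor
        · have : p (s * t ^ (1 - p s)) = 1 := by
            rw [hp_mul]
            have : p (t ^ (1 - p s)) = 1 - p s := by
              simp [hp, map_zpow, ht, toAdd_zpow]
            rw [this]; ring
          rw [this]; simp
        · apply HasWord.wl_le
          apply ((HasWord.single (Set.mem_union_left _ hs)).mul (HasWord.zpow htT _)).mono
          have : 1 + (1 - p s).natAbs ≤ S.sup (fun s => 1 + (1 - p s).natAbs) :=
            Finset.le_sup (f := fun s => 1 + (1 - p s).natAbs) hs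
          omega
      have : s = (s * t ^ (1 - p s)) * t ^ (-(1 - p s)) := by
        rw [mul_assoc, ← zpow_add, add_neg_cancel, zpow_zero, mul_one]
      rw [this]
      exact mul_mem (Subgroup.subset_closure hxsA)
        (zpow_mem (Subgroup.subset_closure htA) _)
    -- A is finite
    have hAfin : A.Finite := (ball_finite hTfin hTgen R).subset (fun x hx => hx.2)
    -- letters of words over A have short T-words and class ±1
    have hletter : ∀ u : G, (u ∈ A ∨ u⁻¹ ∈ A) → HasWord T u R := by
      intro u hu
      rcases hu with hu | hu
      · exact (hasWord_wl hTgen u).mono hu.2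
      · have := ((hasWord_wl hTgen u⁻¹).mono hu.2).inv
        rwa [inv_inv] at this
    have hclass : ∀ u : G, (u ∈ A ∨ u⁻¹ ∈ A) →
        ((p u : ℤ) : ZMod m) = 1 ∨ ((p u : ℤ) : ZMod m) = -1 := by
      intro u hu
      rcases hu with hu | hu
      · exact Or.inl hu.1
      · right
        have := hu.1
        rw [hp_inv] at this
        push_cast at this
        linear_combination -this
    -- epsilon lemma
    have heps : ∀ l : List G, (∀ u ∈ l, u ∈ A ∨ u⁻¹ ∈ A) →
        ∃ e : ℤ, e.natAbs ≤ l.length ∧ ((p l.prod : ℤ) : ZMod m) = (e : ZMod m) := by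
      intro l
      induction l with
      | nil =>
        intro _
        refine ⟨0, by simp, ?_⟩
        have : p 1 = 0 := by simp [hp]
        rw [List.prod_nil, this]
      | cons a l ih =>
        intro h
        obtain ⟨e, he1, he2⟩ := ih (fun u hu => h u (List.mem_cons_of_mem _ hu))
        have hpc : ((p (a * l.prod) : ℤ) : ZMod m)
            = ((p a : ℤ) : ZMod m) + ((p l.prod : ℤ) : ZMod m) := by
          rw [hp_mul]; push_cast; ring
        rcases hclass a (h a (List.mem_cons_self)) with hc | hc
        · refine ⟨1 + e, ?_, ?_⟩
          · have := Int.natAbs_add_le 1 e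
            simp only [List.length_cons]
            omega
          · rw [List.prod_cons, hpc, hc, he2]; push_cast; ring
        · refine ⟨-1 + e, ?_, ?_⟩
          · have := Int.natAbs_add_le (-1) e
            simp only [List.length_cons]
            omega
          · rw [List.prod_cons, hpc, hc, he2]; push_cast; ring
    -- products of letter lists
    have hlist : ∀ l : List G, (∀ u ∈ l, u ∈ A ∨ u⁻¹ ∈ A) →
        HasWord T l.prod (l.length * R) := by
      intro l
      induction l with
      | nil => intro _; rw [List.prod_nil]; exact (HasWord.one T).mono (by simp)
      | cons a l ih =>
        intro h
        rw [List.prod_cons]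
        have := (hletter a (h a (List.mem_cons_self))).mul
          (ih (fun u hu => h u (List.mem_cons_of_mem _ hu)))
        exact this.mono (by simp [List.length_cons]; ring_nf; omega)
    -- the chopping lemma
    have hchop : ∀ d : ℕ, ∀ x : G, ((p x : ℤ) : ZMod m) = ((d + 1 : ℕ) : ZMod m) →
        HasWord T x ((d + 1) * m) → HasWord A x (d + 1) := by
      intro d
      induction d with
      | zero =>
        intro x hx hw
        refine HasWord.single ⟨by simpa using hx, hw.wl_le.trans (by omega)⟩
      | succ d ih =>
        intro x hx hw
        obtain ⟨l, h1, h2, h3⟩ := hw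
        set l₁ := l.take (l.length - 2 * m) with hl₁
        set l₂ := l.drop (l.length - 2 * m) with hl₂
        have hlen₂ : l₂.length ≤ 2 * m := by
          rw [hl₂, List.length_drop]; omega
        have hlen₁ : l₁.length ≤ d * m := by
          rw [hl₁, List.length_take]
          have := h2
          have hle : l.length ≤ (d + 1 + 1) * m := h2
          have hexp : (d + 1 + 1) * m = d * m + 2 * m := by ring
          omega
        set z := l₂.prod with hz
        set c : ℕ := (((p z - 1 : ℤ) : ZMod m)).val with hc
        have hcc : ((c : ℕ) : ZMod m) = ((p z - 1 : ℤ) : ZMod m) :=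
          ZMod.natCast_rightInverse _
        have hclt : c < m := ZMod.val_lt _
        set a := (t ^ c)⁻¹ * z with ha
        have hpa : ((p a : ℤ) : ZMod m) = 1 := by
          have : p a = -(c : ℤ) + p z := by
            rw [ha, hp_mul, hp_inv, hp_pow]
          rw [this]
          push_cast
          rw [hcc]
          push_cast
          ring
        have haA : a ∈ A := by
          refine ⟨hpa, ?_⟩
          apply HasWord.wl_le
          have hzw : HasWord T z (2 * m) :=
            ⟨l₂, fun u hu => h1 u (List.mem_of_mem_drop hu), hlen₂, rfl⟩
          have : HasWord T (t ^ c)⁻¹ c := (HasWord.pow htT c).inv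
          exact (this.mul hzw).mono (by omega)
        have hsplit : l₁.prod * z = x := by
          rw [hl₁, hz, hl₂, ← h3, ← List.prod_append, List.take_append_drop]
        have hx' : x = (l₁.prod * t ^ c) * a := by
          rw [ha]
          rw [mul_assoc, ← mul_assoc (t ^ c), mul_inv_cancel, one_mul, hsplit]
        have hx'w : HasWord T (l₁.prod * t ^ c) ((d + 1) * m) := by
          have hl₁w : HasWord T l₁.prod l₁.length :=
            ⟨l₁, fun u hu => h1 u (List.mem_of_mem_take hu), le_refl _, rfl⟩
          have hexp : (d + 1) * m = d * m + m := by ring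
          exact (hl₁w.mul (HasWord.pow htT c)).mono (by omega)
        have hx'c : ((p (l₁.prod * t ^ c) : ℤ) : ZMod m) = ((d + 1 : ℕ) : ZMod m) := by
          have h5 : p x = p (l₁.prod * t ^ c) + p a := by rw [hx', hp_mul]
          have h6 : ((p (l₁.prod * t ^ c) : ℤ) : ZMod m)
              = ((p x : ℤ) : ZMod m) - ((p a : ℤ) : ZMod m) := by
            rw [h5]; push_cast; ring
          rw [h6, hx, hpa]
          push_cast
          ring
        have := (ih _ hx'c hx'w).mul (HasWord.single haA)
        rwa [← hx'] at this
    -- the dead end element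
    set g₀ := t ^ k with hg₀
    have hpg₀ : p g₀ = (k : ℤ) := by rw [hg₀, hp_pow]
    -- word length of g₀ is exactly k
    have hwlg₀le : wl A g₀ ≤ k := (HasWord.pow htA k).wl_le
    have hwlg₀ : wl A g₀ = k := by
      refine le_antisymm hwlg₀le (le_of_not_gt ?_)
      intro hlt
      obtain ⟨l, h1, h2, h3⟩ := hasWord_wl hgenA g₀
      obtain ⟨e, he1, he2⟩ := heps l h1
      rw [h3, hpg₀] at he2
      have hdvd : ((m : ℕ) : ℤ) ∣ ((k : ℤ) - e) := by
        rw [← ZMod.intCast_zmod_eq_zero_iff_dvd]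
        push_cast at he2 ⊢
        rw [he2]
        ring
      have hlen : l.length < k := lt_of_le_of_lt h2 hlt
      have hea : e.natAbs < k := lt_of_le_of_lt he1 hlen
      have h7 := Int.le_of_dvd (by omega) hdvd
      omega
    -- the ball lemma
    have hball : ∀ l : List G, (∀ u ∈ l, u ∈ A ∨ u⁻¹ ∈ A) → l.length < n →
        wl A (g₀ * l.prod) ≤ k := by
      intro l hl hlen
      obtain ⟨e, he1, he2⟩ := heps l hl
      have hea : e.natAbs < n := lt_of_le_of_lt he1 hlen
      set h := g₀ * l.prod with hh
      have hhT : HasWord T h (k + (n - 1) * R) := by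
        have := (HasWord.pow htT k).mul (hlist l hl)
        apply this.mono
        have : l.length * R ≤ (n - 1) * R := Nat.mul_le_mul_right _ (by omega)
        omega
      have hhc : ((p h : ℤ) : ZMod m) = ((k : ℤ) : ZMod m) + (e : ZMod m) := by
        rw [hh, hp_mul, hpg₀]
        push_cast
        rw [he2]
      set D : ℕ := k - e.natAbs with hD
      have hD1 : 1 ≤ D := by omega
      have hDk : D ≤ k := by omega
      have hDlb : k - (n - 1) ≤ D := by omega
      have harith : k + (n - 1) * R ≤ D * m := by
        have h8 : (3 * n + 1 + W) ≤ D := by omega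
        have h9 : (3 * n + 1 + W) * m ≤ D * m := Nat.mul_le_mul_right _ h8
        have h10 : k + (n - 1) * R ≤ (3 * n + 1 + W) * m := by
          obtain ⟨n', rfl⟩ : ∃ n', n = n' + 1 := ⟨n - 1, by omega⟩
          rw [hR, hm, hk]
          simp only [Nat.add_sub_cancel]
          nlinarith [Nat.zero_le (n' * W), Nat.zero_le W]
        omega
      have hmm : ((m : ℕ) : ZMod m) = 0 := ZMod.natCast_self m
      rcases le_or_gt e 0 with hgood | hbad
      · -- use h directly
        have hDe : ((D : ℕ) : ℤ) = (k : ℤ) + e := by omega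
        have hclassD : ((p h : ℤ) : ZMod m) = ((D : ℕ) : ZMod m) := by
          rw [hhc]
          have : (((D : ℕ) : ℤ) : ZMod m) = ((k : ℤ) : ZMod m) + (e : ZMod m) := by
            rw [hDe]; push_cast; ring
          rw [← this]; push_cast; ring
        have := hchop (D - 1) h
          (by rw [Nat.sub_add_cancel hD1]; exact hclassD)
          (hhT.mono (by rw [Nat.sub_add_cancel hD1]; exact harith))
        rw [Nat.sub_add_cancel hD1] at this
        exact this.wl_le.trans hDk
      · -- use h⁻¹
        have hDe : ((D : ℕ) : ℤ) = (k : ℤ) - e := by omega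
        have hinvc : ((p h⁻¹ : ℤ) : ZMod m) = ((D : ℕ) : ZMod m) := by
          have h11 : ((p h⁻¹ : ℤ) : ZMod m) = -(((k : ℤ) : ZMod m) + (e : ZMod m)) := by
            rw [hp_inv]
            push_cast
            rw [hhc]
            push_cast
            ring
          rw [h11]
          have h12 : -(((k : ℤ) : ZMod m) + ((e : ℤ) : ZMod m))
              = (((k : ℤ) - e : ℤ) : ZMod m) - (((2 * k : ℕ) : ℕ) : ZMod m) := by
            push_cast
            ring
          rw [h12, ← hm, hmm, ← hDe]
          push_cast
          ring
        have hhTinv : HasWord T h⁻¹ (k + (n - 1) * R) := hhT.inv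
        have := hchop (D - 1) h⁻¹
          (by rw [Nat.sub_add_cancel hD1]; exact hinvc)
          (hhTinv.mono (by rw [Nat.sub_add_cancel hD1]; exact harith))
        rw [Nat.sub_add_cancel hD1] at this
        have := this.inv
        rw [inv_inv] at this
        exact this.wl_le.trans hDk
    -- depth of g₀ is at least n
    have hdepth : (n : ℕ∞) ≤ depth A g₀ := by
      apply le_sInf
      rintro b ⟨g', hg', rfl⟩
      simp only [Set.mem_setOf_eq] at hg'
      simp only
      rw [Nat.cast_le]
      by_contra hlt
      push_neg at hlt
      obtain ⟨l, h1, h2, h3⟩ := hasWord_wl hgenA (g₀⁻¹ * g')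
      have hg'eq : g' = g₀ * l.prod := by rw [h3]; group
      have hb := hball l h1 (lt_of_le_of_lt h2 hlt)
      rw [← hg'eq] at hb
      rw [hwlg₀] at hg'
      omega
    refine ⟨A, hAfin, hgenA, hdepth.trans (le_iSup _ g₀)⟩
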